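/- arXiv:1312.4628 — 4 statements merged into one kernel-verified Lean document; each statement's English description precedes it below -/
import Mathlib

section
/- The function f(x) = 1 + 3x + 3x(x-1) + x(x-1)(x-2)/2 = (x^3 + 3x^2 + 2x + 2)/2 is log-concave on the interval [1, ∞), i.e., log(f(x)) is a concave function of x for x ≥ 1. -/
/-- `f(x) = (x³ + 3x² + 2x + 2)/2`. -/
noncomputable def f (x : ℝ) : ℝ := (x ^ 3 + 3 * x ^ 2 + 2 * x + 2) / 2

lemma f_pos {x : ℝ} (hx : (1:ℝ) ≤ x) : 0 < f x := by
  unfold f; nlinarith [sq_nonneg x, sq_nonneg (x-1)]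

lemma hasDerivAt_f (x : ℝ) : HasDerivAt f ((3 * x ^ 2 + 6 * x + 2) / 2) x := by
  have h : HasDerivAt (fun x : ℝ => (x ^ 3 + 3 * x ^ 2 + 2 * x + 2) / 2)
      ((3 * x ^ 2 + 6 * x + 2) / 2) x := by
    have h1 : HasDerivAt (fun x : ℝ => x ^ 3 + 3 * x ^ 2 + 2 * x + 2)
        (3 * x ^ 2 + 6 * x + 2) x := by
      have := (((hasDerivAt_pow 3 x).add ((hasDerivAt_pow 2 x).const_mul 3)).add
        ((hasDerivAt_id x).const_mul 2)).add_const 2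
      refine this.congr_deriv ?_
      push_cast; ring
    exact h1.div_const 2
  exact h

lemma concave_log_f : ConcaveOn ℝ (Set.Ici (1 : ℝ)) (fun x => Real.log (f x)) := by
  have hint : interior (Set.Ici (1:ℝ)) = Set.Ioi 1 := interior_Ici
  refine concaveOn_of_hasDerivWithinAt2_nonpos (f' := fun x => ((3 * x ^ 2 + 6 * x + 2) / 2) / f x)
    (f'' := fun x => (((3 * x + 3) * f x - ((3 * x ^ 2 + 6 * x + 2) / 2) ^ 2) / (f x) ^ 2))
    (convex_Ici 1) ?_ ?_ ?_ ?_
  · have hcf : Continuous f := by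
      unfold f; continuity
    exact Real.continuousOn_log.comp hcf.continuousOn (fun x hx => (f_pos hx).ne')
  · intro x hx
    rw [hint] at hx
    exact (((hasDerivAt_f x).log (f_pos (le_of_lt hx)).ne')).hasDerivWithinAt
  · intro x hx
    rw [hint] at hx
    have hx1 : (1:ℝ) ≤ x := le_of_lt hx
    have hd : HasDerivAt (fun x => ((3 * x ^ 2 + 6 * x + 2) / 2) / f x)
        ((((3 * x + 3)) * f x - ((3 * x ^ 2 + 6 * x + 2) / 2) * ((3 * x ^ 2 + 6 * x + 2) / 2)) /
          (f x) ^ 2) x := by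
      have hnum : HasDerivAt (fun x : ℝ => (3 * x ^ 2 + 6 * x + 2) / 2) (3 * x + 3) x := by
        have h1 := (((hasDerivAt_pow 2 x).const_mul 3).add ((hasDerivAt_id x).const_mul 6)).add_const 2
        have := h1.div_const 2
        refine this.congr_deriv ?_
        push_cast; ring
      exact hnum.div (hasDerivAt_f x) (f_pos hx1).ne'
    have : (((3 * x + 3)) * f x - ((3 * x ^ 2 + 6 * x + 2) / 2) * ((3 * x ^ 2 + 6 * x + 2) / 2)) /
        (f x) ^ 2 = ((3 * x + 3) * f x - ((3 * x ^ 2 + 6 * x + 2) / 2) ^ 2) / (f x) ^ 2 := by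
      ring
    rw [this] at hd
    exact hd.hasDerivWithinAt
  · intro x hx
    rw [hint] at hx
    have hx1 : (1:ℝ) ≤ x := le_of_lt hx
    have hfpos := f_pos hx1
    apply div_nonpos_of_nonpos_of_nonneg _ (sq_nonneg _)
    have : (3 * x + 3) * f x - ((3 * x ^ 2 + 6 * x + 2) / 2) ^ 2 =
        -(3 * x ^ 4 + 12 * x ^ 3 + 18 * x ^ 2 - 8) / 4 := by
      unfold f; ring
    rw [this]
    have : (0:ℝ) ≤ 3 * x ^ 4 + 12 * x ^ 3 + 18 * x ^ 2 - 8 := by nlinarith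
    linarith

/-- `f` is log-concave on `[1, ∞)`: `log ∘ f` is concave there, equivalently
`f(tx + (1-t)y) ≥ f(x)^t · f(y)^(1-t)` for `x, y ≥ 1` and `t ∈ [0,1]`. -/
theorem f_logConcave :
    ConcaveOn ℝ (Set.Ici (1 : ℝ)) (fun x => Real.log (f x)) ∧
    ∀ x y : ℝ, 1 ≤ x → 1 ≤ y → ∀ t : ℝ, 0 ≤ t → t ≤ 1 →
      f x ^ t * f y ^ (1 - t) ≤ f (t * x + (1 - t) * y) := by
  refine ⟨concave_log_f, ?_⟩
  intro x y hx hy t ht0 ht1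
  have hmem : t * x + (1 - t) * y ∈ Set.Ici (1:ℝ) := by
    simp only [Set.mem_Ici]
    nlinarith
  have hc := concave_log_f.2 (Set.mem_Ici.mpr hx) (Set.mem_Ici.mpr hy) ht0 (by linarith)
    (by ring : t + (1 - t) = 1)
  simp only [smul_eq_mul] at hc
  have hfx := f_pos hx
  have hfy := f_pos hy
  have hfz := f_pos (Set.mem_Ici.mp hmem)
  calc f x ^ t * f y ^ (1 - t)
      = Real.exp (t * Real.log (f x) + (1 - t) * Real.log (f y)) := by
        rw [Real.exp_add, Real.rpow_def_of_pos hfx, Real.rpow_def_of_pos hfy]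
        ring_nf
    _ ≤ Real.exp (Real.log (f (t * x + (1 - t) * y))) := Real.exp_le_exp.mpr hc
    _ = f (t * x + (1 - t) * y) := Real.exp_log hfz
end

section
/- Let P be a point set with onion layers of sizes n_1, ..., n_k. The number of ordered triples of pairwise vertex-disjoint descending paths in P, where each descending path uses at most one vertex from each onion layer and the three paths are compatible with a fixed cyclic order on each layer, is at most ∏_{i=1}^k f(n_i), where f(x) = (x^3 + 3x^2 + 2x + 2)/2. -/
open scoped Classical

/-- `(a, b, c)` is consistent with the fixed cyclic order induced by the
linear order on labels: one of the three cyclic rotations of `a < b < c`. -/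
def Pos3 (a b c : ℕ) : Prop :=
  (a < b ∧ b < c) ∨ (b < c ∧ c < a) ∨ (c < a ∧ a < b)

/-- Triples of pairwise disjoint vertex sets of descending paths: at most one
vertex per onion layer, all vertices in the layers, compatible with the fixed
cyclic order on each layer. -/
noncomputable def descTriples (k : ℕ) (L : Fin k → Finset ℕ) :
    Finset (Finset ℕ × Finset ℕ × Finset ℕ) :=
  letI U : Finset ℕ := (Finset.univ : Finset (Fin k)).biUnion L
  Finset.filter
    (fun T =>
      Disjoint T.1 T.2.1 ∧ Disjoint T.1 T.2.2 ∧ Disjoint T.2.1 T.2.2 ∧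
      (∀ i, (T.1 ∩ L i).card ≤ 1) ∧
      (∀ i, (T.2.1 ∩ L i).card ≤ 1) ∧
      (∀ i, (T.2.2 ∩ L i).card ≤ 1) ∧
      (∀ i, ∀ a ∈ T.1 ∩ L i, ∀ b ∈ T.2.1 ∩ L i, ∀ c ∈ T.2.2 ∩ L i,
        Pos3 a b c))
    (U.powerset ×ˢ U.powerset ×ˢ U.powerset)

/-! ### Auxiliary material -/

lemma pos3_not_swap {a b c : ℕ} (h : Pos3 a b c) : ¬ Pos3 a c b := by
  unfold Pos3 at *; omega

/-- pick the element of a nonempty set, else default -/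
noncomputable def pk (s : Finset ℕ) (d : ℕ) : ℕ :=
  if h : s.Nonempty then s.min' h else d

@[simp] lemma pk_empty (d : ℕ) : pk ∅ d = d := by simp [pk]

@[simp] lemma pk_singleton (x d : ℕ) : pk {x} d = x := by simp [pk]

lemma small_form {s : Finset ℕ} (h : s.card ≤ 1) : s = ∅ ∨ ∃ x, s = {x} := by
  rcases s.eq_empty_or_nonempty with h0 | h0
  · exact Or.inl h0
  · exact Or.inr (Finset.card_eq_one.1 (le_antisymm h (Finset.card_pos.2 h0)))

/-- the per-layer set of admissible triples of (at most singleton) slices -/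
noncomputable def SL (M : Finset ℕ) : Finset (Finset ℕ × Finset ℕ × Finset ℕ) :=
  (M.powerset ×ˢ M.powerset ×ˢ M.powerset).filter
    (fun t => Disjoint t.1 t.2.1 ∧ Disjoint t.1 t.2.2 ∧ Disjoint t.2.1 t.2.2 ∧
      t.1.card ≤ 1 ∧ t.2.1.card ≤ 1 ∧ t.2.2.card ≤ 1 ∧
      ∀ a ∈ t.1, ∀ b ∈ t.2.1, ∀ c ∈ t.2.2, Pos3 a b c)

/-- distinct triples of elements -/
noncomputable def DT (M : Finset ℕ) : Finset (ℕ × ℕ × ℕ) :=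
  (M ×ˢ M ×ˢ M).filter (fun t => t.1 ≠ t.2.1 ∧ t.1 ≠ t.2.2 ∧ t.2.1 ≠ t.2.2)

lemma mem_DT {M : Finset ℕ} {t : ℕ × ℕ × ℕ} :
    t ∈ DT M ↔ t.1 ∈ M ∧ t.2.1 ∈ M ∧ t.2.2 ∈ M ∧ t.1 ≠ t.2.1 ∧ t.1 ≠ t.2.2 ∧ t.2.1 ≠ t.2.2 := by
  simp [DT, and_assoc]

lemma DT_card (M : Finset ℕ) :
    (DT M).card = M.card * ((M.card - 1) * (M.card - 1) - (M.card - 1)) := by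
  have hDT : DT M = M.biUnion (fun x => ((M.erase x).offDiag).image (fun p => (x, p.1, p.2))) := by
    ext ⟨x, y, z⟩
    simp only [mem_DT, Finset.mem_biUnion, Finset.mem_image, Finset.mem_offDiag,
      Finset.mem_erase, Prod.mk.injEq, Prod.exists]
    constructor
    · rintro ⟨hx, hy, hz, hxy, hxz, hyz⟩
      exact ⟨x, hx, y, z, ⟨⟨Ne.symm hxy, hy⟩, ⟨Ne.symm hxz, hz⟩, hyz⟩, rfl, rfl, rfl⟩
    · rintro ⟨x', hx', y', z', ⟨⟨hyx, hy⟩, ⟨hzx, hz⟩, hyz⟩, rfl, rfl, rfl⟩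
      exact ⟨hx', hy, hz, Ne.symm hyx, Ne.symm hzx, hyz⟩
  rw [hDT, Finset.card_biUnion]
  · have : ∀ x ∈ M, (((M.erase x).offDiag).image (fun p : ℕ × ℕ => (x, p.1, p.2))).card
        = ((M.card - 1) * (M.card - 1) - (M.card - 1)) := by
      intro x hx
      rw [Finset.card_image_of_injective _ (by intro p q h; simpa [Prod.ext_iff] using h),
        Finset.offDiag_card, Finset.card_erase_of_mem hx]
    rw [Finset.sum_congr rfl this, Finset.sum_const, smul_eq_mul]
  · intro x hx y hy hxy
    simp only [Finset.disjoint_left, Finset.mem_image, Prod.exists]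
    rintro a ⟨p, q, hpq, rfl⟩ ⟨p', q', hpq', h⟩
    exact hxy (by simpa using congrArg Prod.fst h.symm)

lemma S3_form {M : Finset ℕ} {t : Finset ℕ × Finset ℕ × Finset ℕ}
    (ht : t ∈ (SL M).filter (fun t => ¬(t.1 = ∅ ∨ t.2.1 = ∅ ∨ t.2.2 = ∅))) :
    ∃ x y z, t = ({x}, {y}, {z}) ∧ x ∈ M ∧ y ∈ M ∧ z ∈ M ∧
      x ≠ y ∧ x ≠ z ∧ y ≠ z ∧ Pos3 x y z := by
  simp only [Finset.mem_filter, SL, Finset.mem_product, Finset.mem_powerset] at ht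
  obtain ⟨⟨⟨h1, h2, h3⟩, d12, d13, d23, c1, c2, c3, hpos⟩, hne⟩ := ht
  push_neg at hne
  obtain ⟨e1, e2, e3⟩ := hne
  rcases small_form c1 with h | ⟨x, hx⟩; · exact absurd h e1.ne_empty
  rcases small_form c2 with h | ⟨y, hy⟩; · exact absurd h e2.ne_empty
  rcases small_form c3 with h | ⟨z, hz⟩; · exact absurd h e3.ne_empty
  obtain ⟨a, b, c⟩ := t
  simp only at h1 h2 h3 d12 d13 d23 c1 c2 c3 hpos hx hy hz
  subst hx hy hz
  have hxM : x ∈ M := h1 (by simp)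
  have hyM : y ∈ M := h2 (by simp)
  have hzM : z ∈ M := h3 (by simp)
  refine ⟨x, y, z, rfl, hxM, hyM, hzM, ?_, ?_, ?_, hpos x (by simp) y (by simp) z (by simp)⟩
  · rintro rfl; exact (Finset.disjoint_left.1 d12) (Finset.mem_singleton_self x) (Finset.mem_singleton_self x)
  · rintro rfl; exact (Finset.disjoint_left.1 d13) (Finset.mem_singleton_self x) (Finset.mem_singleton_self x)
  · rintro rfl; exact (Finset.disjoint_left.1 d23) (Finset.mem_singleton_self y) (Finset.mem_singleton_self y)

lemma S3_card (M : Finset ℕ) :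
    2 * ((SL M).filter (fun t => ¬(t.1 = ∅ ∨ t.2.1 = ∅ ∨ t.2.2 = ∅))).card ≤ (DT M).card := by
  set S3 := (SL M).filter (fun t => ¬(t.1 = ∅ ∨ t.2.1 = ∅ ∨ t.2.2 = ∅)) with hS3
  have b1 : S3.card ≤ ((DT M).filter (fun t => Pos3 t.1 t.2.1 t.2.2)).card := by
    apply Finset.card_le_card_of_injOn (fun t => (pk t.1 0, pk t.2.1 0, pk t.2.2 0))
    · intro t ht
      obtain ⟨x, y, z, rfl, hx, hy, hz, hxy, hxz, hyz, hp⟩ := S3_form ht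
      simp only [pk_singleton, Finset.mem_coe, Finset.mem_filter, mem_DT]
      exact ⟨⟨hx, hy, hz, hxy, hxz, hyz⟩, hp⟩
    · intro t ht u hu h
      obtain ⟨x, y, z, rfl, -⟩ := S3_form ht
      obtain ⟨x', y', z', rfl, -⟩ := S3_form hu
      simp only [pk_singleton, Prod.mk.injEq] at h
      simp [h.1, h.2.1, h.2.2]
  have b2 : S3.card ≤ ((DT M).filter (fun t => ¬ Pos3 t.1 t.2.1 t.2.2)).card := by
    apply Finset.card_le_card_of_injOn (fun t => (pk t.1 0, pk t.2.2 0, pk t.2.1 0))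
    · intro t ht
      obtain ⟨x, y, z, rfl, hx, hy, hz, hxy, hxz, hyz, hp⟩ := S3_form ht
      simp only [pk_singleton, Finset.mem_coe, Finset.mem_filter, mem_DT]
      exact ⟨⟨hx, hz, hy, hxz, hxy, Ne.symm hyz⟩, pos3_not_swap hp⟩
    · intro t ht u hu h
      obtain ⟨x, y, z, rfl, -⟩ := S3_form ht
      obtain ⟨x', y', z', rfl, -⟩ := S3_form hu
      simp only [pk_singleton, Prod.mk.injEq] at h
      simp [h.1, h.2.1, h.2.2]
  have := Finset.card_filter_add_card_filter_not
    (s := DT M) (p := fun t => Pos3 t.1 t.2.1 t.2.2)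
  omega

noncomputable def enc (t : Finset ℕ × Finset ℕ × Finset ℕ) : Option (ℕ × ℕ × ℕ) :=
  if t.1 = ∅ ∧ t.2.1 = ∅ ∧ t.2.2 = ∅ then none
  else if t.1 = ∅ ∧ t.2.1 ≠ ∅ then some (0, pk t.2.1 0, pk t.2.2 (pk t.2.1 0))
  else if t.2.1 = ∅ ∧ t.1 ≠ ∅ then some (1, pk t.1 0, pk t.2.2 (pk t.1 0))
  else some (2, pk t.1 (pk t.2.2 0), pk t.2.1 (pk t.2.2 0))

noncomputable def dec (o : Option (ℕ × ℕ × ℕ)) : Finset ℕ × Finset ℕ × Finset ℕ :=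
  match o with
  | none => (∅, ∅, ∅)
  | some (0, y, w) => (∅, {y}, if w = y then ∅ else {w})
  | some (1, x, w) => ({x}, ∅, if w = x then ∅ else {w})
  | some (_, u, v) => if u = v then (∅, ∅, {u}) else ({u}, {v}, ∅)

lemma S2_props {M : Finset ℕ} {t : Finset ℕ × Finset ℕ × Finset ℕ}
    (ht : t ∈ (SL M).filter (fun t => t.1 = ∅ ∨ t.2.1 = ∅ ∨ t.2.2 = ∅)) :
    enc t ∈ Finset.insertNone ((Finset.range 3) ×ˢ M ×ˢ M) ∧ dec (enc t) = t := by
  simp only [Finset.mem_filter, SL, Finset.mem_product, Finset.mem_powerset] at ht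
  obtain ⟨⟨⟨h1, h2, h3⟩, d12, d13, d23, c1, c2, c3, hpos⟩, hne⟩ := ht
  obtain ⟨a, b, c⟩ := t
  simp only at h1 h2 h3 d12 d13 d23 c1 c2 c3 hne ⊢
  rcases small_form c1 with rfl | ⟨x, rfl⟩ <;>
    rcases small_form c2 with rfl | ⟨y, rfl⟩ <;>
      rcases small_form c3 with rfl | ⟨z, rfl⟩
  · simp [enc, dec, Finset.mem_insertNone]
  · have hz : z ∈ M := h3 (Finset.mem_singleton_self z)
    simp [enc, dec, Finset.singleton_ne_empty, Finset.mem_insertNone, hz]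
  · have hy : y ∈ M := h2 (Finset.mem_singleton_self y)
    simp [enc, dec, Finset.singleton_ne_empty, Finset.mem_insertNone, hy]
  · have hy : y ∈ M := h2 (Finset.mem_singleton_self y)
    have hz : z ∈ M := h3 (Finset.mem_singleton_self z)
    have hyz : z ≠ y := by
      rintro rfl
      exact (Finset.disjoint_left.1 d23) (Finset.mem_singleton_self z) (Finset.mem_singleton_self z)
    simp [enc, dec, Finset.singleton_ne_empty, Finset.mem_insertNone, hy, hz, hyz]
  · have hx : x ∈ M := h1 (Finset.mem_singleton_self x)
    simp [enc, dec, Finset.singleton_ne_empty, Finset.mem_insertNone, hx]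
  · have hx : x ∈ M := h1 (Finset.mem_singleton_self x)
    have hz : z ∈ M := h3 (Finset.mem_singleton_self z)
    have hxz : z ≠ x := by
      rintro rfl
      exact (Finset.disjoint_left.1 d13) (Finset.mem_singleton_self z) (Finset.mem_singleton_self z)
    simp [enc, dec, Finset.singleton_ne_empty, Finset.mem_insertNone, hx, hz, hxz]
  · have hx : x ∈ M := h1 (Finset.mem_singleton_self x)
    have hy : y ∈ M := h2 (Finset.mem_singleton_self y)
    have hxy : x ≠ y := by
      rintro rfl
      exact (Finset.disjoint_left.1 d12) (Finset.mem_singleton_self x) (Finset.mem_singleton_self x)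
    simp [enc, dec, Finset.singleton_ne_empty, Finset.mem_insertNone, hx, hy, hxy]
  · simp [Finset.singleton_ne_empty] at hne

lemma S2_card (M : Finset ℕ) :
    ((SL M).filter (fun t => t.1 = ∅ ∨ t.2.1 = ∅ ∨ t.2.2 = ∅)).card
      ≤ 3 * (M.card * M.card) + 1 := by
  have h : ((SL M).filter (fun t => t.1 = ∅ ∨ t.2.1 = ∅ ∨ t.2.2 = ∅)).card
      ≤ (Finset.insertNone ((Finset.range 3) ×ˢ M ×ˢ M)).card := by
    apply Finset.card_le_card_of_injOn enc
    · exact fun t ht => (S2_props ht).1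
    · intro t ht u hu heq
      have h1 := (S2_props (M := M) ht).2
      have h2 := (S2_props (M := M) hu).2
      rw [← h1, ← h2, heq]
  calc _ ≤ (Finset.insertNone ((Finset.range 3) ×ˢ M ×ˢ M)).card := h
    _ = 3 * (M.card * M.card) + 1 := by
        rw [Finset.card_insertNone]
        simp [Finset.card_product]

lemma SL_card (M : Finset ℕ) :
    2 * (SL M).card ≤ M.card ^ 3 + 3 * M.card ^ 2 + 2 * M.card + 2 := by
  have hsplit := Finset.card_filter_add_card_filter_not
    (s := SL M) (p := fun t => t.1 = ∅ ∨ t.2.1 = ∅ ∨ t.2.2 = ∅)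
  have h2 := S2_card M
  have h3 := S3_card M
  rw [DT_card M] at h3
  have hsq : M.card * M.card = M.card ^ 2 := (sq M.card).symm
  rw [hsq] at h2
  have h4 : M.card * ((M.card - 1) * (M.card - 1) - (M.card - 1)) + 3 * M.card ^ 2
      = M.card ^ 3 + 2 * M.card := by
    rcases hm : M.card with _ | m
    · rfl
    · have hm' : m ≤ m * m := by nlinarith
      simp only [Nat.add_sub_cancel]
      zify [hm']
      ring
  generalize hA : M.card ^ 3 = A at h4 ⊢
  generalize hB : M.card ^ 2 = B at h2 h4 ⊢
  generalize hD : M.card * ((M.card - 1) * (M.card - 1) - (M.card - 1)) = D at h3 h4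
  omega

lemma SL_card_real (M : Finset ℕ) : ((SL M).card : ℝ) ≤ f (M.card : ℝ) := by
  have h := SL_card M
  have h' : ((2 * (SL M).card : ℕ) : ℝ)
      ≤ ((M.card ^ 3 + 3 * M.card ^ 2 + 2 * M.card + 2 : ℕ) : ℝ) := by exact_mod_cast h
  push_cast at h'
  rw [f]
  linarith

/-- The number of ordered triples of pairwise vertex-disjoint descending paths
(each identified with its vertex set, using at most one vertex per layer and
compatible with the fixed cyclic order on each layer) is at most `∏ᵢ f(nᵢ)`,
where `nᵢ` are the onion-layer sizes. -/
theorem card_disjoint_triples_le (k : ℕ) (L : Fin k → Finset ℕ)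
    (hdisj : ∀ i j, i ≠ j → Disjoint (L i) (L j)) :
    ((descTriples k L).card : ℝ) ≤ ∏ i, f (((L i).card : ℝ)) := by
  set U : Finset ℕ := (Finset.univ : Finset (Fin k)).biUnion L with hU
  -- recover a set from its slices
  have slices : ∀ A B : Finset ℕ, A ⊆ U → B ⊆ U →
      (∀ i, A ∩ L i = B ∩ L i) → A = B := by
    intro A B hA hB h
    ext x
    constructor
    · intro hx
      obtain ⟨i, -, hi⟩ := Finset.mem_biUnion.1 (hA hx)
      have : x ∈ B ∩ L i := (h i) ▸ (Finset.mem_inter.2 ⟨hx, hi⟩)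
      exact (Finset.mem_inter.1 this).1
    · intro hx
      obtain ⟨i, -, hi⟩ := Finset.mem_biUnion.1 (hB hx)
      have : x ∈ A ∩ L i := (h i).symm ▸ (Finset.mem_inter.2 ⟨hx, hi⟩)
      exact (Finset.mem_inter.1 this).1
  have hnat : (descTriples k L).card ≤ (Fintype.piFinset (fun i => SL (L i))).card := by
    apply Finset.card_le_card_of_injOn
      (fun T i => (T.1 ∩ L i, T.2.1 ∩ L i, T.2.2 ∩ L i))
    · intro T hT
      simp only [descTriples, Finset.mem_coe, Finset.mem_filter, Finset.mem_product,
        Finset.mem_powerset] at hT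
      obtain ⟨⟨hT1, hT2, hT3⟩, d12, d13, d23, c1, c2, c3, hpos⟩ := hT
      rw [Finset.mem_coe, Fintype.mem_piFinset]
      intro i
      simp only [SL, Finset.mem_filter, Finset.mem_product, Finset.mem_powerset]
      refine ⟨⟨Finset.inter_subset_right, Finset.inter_subset_right,
        Finset.inter_subset_right⟩,
        d12.mono Finset.inter_subset_left Finset.inter_subset_left,
        d13.mono Finset.inter_subset_left Finset.inter_subset_left,
        d23.mono Finset.inter_subset_left Finset.inter_subset_left,
        c1 i, c2 i, c3 i, hpos i⟩
    · intro T hT T' hT' heq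
      simp only [descTriples, Finset.mem_coe, Finset.mem_filter, Finset.mem_product,
        Finset.mem_powerset] at hT hT'
      obtain ⟨⟨hT1, hT2, hT3⟩, -⟩ := hT
      obtain ⟨⟨hT1', hT2', hT3'⟩, -⟩ := hT'
      have h1 : ∀ i, (T.1 ∩ L i, T.2.1 ∩ L i, T.2.2 ∩ L i)
          = (T'.1 ∩ L i, T'.2.1 ∩ L i, T'.2.2 ∩ L i) := fun i => congrFun heq i
      have e1 : T.1 = T'.1 := slices _ _ hT1 hT1' (fun i => congrArg Prod.fst (h1 i))
      have e2 : T.2.1 = T'.2.1 := slices _ _ hT2 hT2'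
        (fun i => congrArg (fun p => p.2.1) (h1 i))
      have e3 : T.2.2 = T'.2.2 := slices _ _ hT3 hT3'
        (fun i => congrArg (fun p => p.2.2) (h1 i))
      exact Prod.ext e1 (Prod.ext e2 e3)
  rw [Fintype.card_piFinset] at hnat
  calc ((descTriples k L).card : ℝ)
      ≤ ((∏ i, (SL (L i)).card : ℕ) : ℝ) := by exact_mod_cast hnat
    _ = ∏ i, ((SL (L i)).card : ℝ) := by push_cast; rfl
    _ ≤ ∏ i, f (((L i).card : ℝ)) := by
        apply Finset.prod_le_prod
        · intro i _; positivity
        · intro i _; exact SL_card_real (L i)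
end

section
/- If n points are in general position in the plane and every onion layer except possibly the last has at least 3 points, and the layer sizes are n_1, ..., n_k with ∑ n_i = n, then ∏_{i=1}^k f(n_i) ≤ f(1)·f(2)·31^(n/3) = O(31^(n/3)), where f(x) = (x^3 + 3x^2 + 2x + 2)/2. -/
lemma f_pos_s17 (m : ℕ) : 0 < f (m : ℝ) := by
  unfold f
  positivity

lemma one_le_rpow31 {e : ℝ} (he : 0 ≤ e) : 1 ≤ (31 : ℝ) ^ e := by
  calc (1 : ℝ) = (31 : ℝ) ^ (0 : ℝ) := by rw [Real.rpow_zero]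
  _ ≤ (31 : ℝ) ^ e := Real.rpow_le_rpow_of_exponent_le (by norm_num) he

lemma two_le_rpow31 : (2 : ℝ) ≤ (31 : ℝ) ^ ((1 : ℝ) / 3) := by
  have h8 : ((8 : ℝ)) ^ ((1 : ℝ) / 3) = 2 := by
    have : ((8 : ℝ)) = (2 : ℝ) ^ (3 : ℝ) := by
      rw [show (3:ℝ) = ((3:ℕ):ℝ) by norm_num, Real.rpow_natCast]; norm_num
    rw [this, ← Real.rpow_mul (by norm_num)]
    norm_num
  calc (2 : ℝ) = (8 : ℝ) ^ ((1 : ℝ) / 3) := h8.symm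
  _ ≤ (31 : ℝ) ^ ((1 : ℝ) / 3) :=
      Real.rpow_le_rpow (by norm_num) (by norm_num) (by norm_num)

lemma key (m : ℕ) (h : 3 ≤ m) : f (m : ℝ) ≤ (31 : ℝ) ^ ((m : ℝ) / 3) := by
  induction m, h using Nat.le_induction with
  | base =>
    norm_num [f]
  | succ m hm ih =>
    have hx : (3 : ℝ) ≤ (m : ℝ) := by exact_mod_cast hm
    have h2 : f ((m : ℝ) + 1) ≤ 2 * f (m : ℝ) := by
      unfold f; nlinarith [sq_nonneg ((m:ℝ) - 3), pow_pos (by linarith : (0:ℝ) < (m:ℝ)) 3]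
    have hsplit : ((m : ℝ) + 1) / 3 = (1 : ℝ) / 3 + (m : ℝ) / 3 := by ring
    have hpos : (0 : ℝ) < (31 : ℝ) ^ ((m : ℝ) / 3) := Real.rpow_pos_of_pos (by norm_num) _
    calc f (((m + 1 : ℕ)) : ℝ) = f ((m : ℝ) + 1) := by push_cast; ring_nf
    _ ≤ 2 * f (m : ℝ) := h2
    _ ≤ 2 * ((31 : ℝ) ^ ((m : ℝ) / 3)) := by nlinarith [f_pos_s17 m]
    _ ≤ (31 : ℝ) ^ ((1 : ℝ) / 3) * (31 : ℝ) ^ ((m : ℝ) / 3) := by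
        nlinarith [two_le_rpow31]
    _ = (31 : ℝ) ^ (((m + 1 : ℕ) : ℝ) / 3) := by
        push_cast
        rw [hsplit, Real.rpow_add (by norm_num)]

lemma last_key (m : ℕ) (h : 1 ≤ m) :
    f (m : ℝ) ≤ f 1 * f 2 * (31 : ℝ) ^ ((m : ℝ) / 3) := by
  have h12 : f 1 * f 2 = 52 := by norm_num [f]
  obtain h1 | h2 | h3 : m = 1 ∨ m = 2 ∨ 3 ≤ m := by omega
  · subst h1
    have := one_le_rpow31 (e := ((1:ℕ):ℝ) / 3) (by norm_num)
    rw [h12]; norm_num [f] at this ⊢; linarith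
  · subst h2
    have := one_le_rpow31 (e := ((2:ℕ):ℝ) / 3) (by norm_num)
    rw [h12]; norm_num [f] at this ⊢; linarith
  · have := key m h3
    have hp : (0 : ℝ) < (31 : ℝ) ^ ((m : ℝ) / 3) := Real.rpow_pos_of_pos (by norm_num) _
    rw [h12]; nlinarith

/-- If the onion-layer sizes `n₁, …, n_k` sum to `n`, every layer except
possibly the last has at least 3 points, and the last is nonempty, then
`∏ᵢ f(nᵢ) ≤ f(1)·f(2)·31^(n/3) = O(31^(n/3))`. -/
theorem prod_f_le_const_mul (n k : ℕ) (hk : 0 < k) (a : Fin k → ℕ)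
    (hmost : ∀ i : Fin k, (i : ℕ) < k - 1 → 3 ≤ a i)
    (hlast : 1 ≤ a ⟨k - 1, Nat.sub_lt hk one_pos⟩)
    (hsum : ∑ i, a i = n) :
    ∏ i, f ((a i : ℝ)) ≤ f 1 * f 2 * (31 : ℝ) ^ ((n : ℝ) / 3) := by
  set last : Fin k := ⟨k - 1, Nat.sub_lt hk one_pos⟩ with hlastdef
  have hsplit := Finset.prod_erase_mul Finset.univ (fun i => f ((a i : ℝ)))
    (Finset.mem_univ last)
  have hsumsplit := Finset.sum_erase_add Finset.univ a (Finset.mem_univ last)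
  -- bound the erased product
  have h1 : ∏ i ∈ Finset.univ.erase last, f ((a i : ℝ)) ≤
      ∏ i ∈ Finset.univ.erase last, (31 : ℝ) ^ ((a i : ℝ) / 3) := by
    apply Finset.prod_le_prod
    · intro i _; exact (f_pos_s17 (a i)).le
    · intro i hi
      have hne : i ≠ last := (Finset.mem_erase.mp hi).1
      have : (i : ℕ) < k - 1 := by
        have hv : (i : ℕ) ≠ k - 1 := fun hv => hne (Fin.ext hv)
        have := i.isLt; omega
      exact key (a i) (hmost i this)
  have h2 : ∏ i ∈ Finset.univ.erase last, (31 : ℝ) ^ ((a i : ℝ) / 3) =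
      (31 : ℝ) ^ ((∑ i ∈ Finset.univ.erase last, (a i : ℝ)) / 3) := by
    rw [Finset.sum_div, Real.rpow_sum_of_pos (by norm_num)]
  have h3 : f ((a last : ℝ)) ≤ f 1 * f 2 * (31 : ℝ) ^ ((a last : ℝ) / 3) :=
    last_key (a last) hlast
  have hppos : (0 : ℝ) ≤ ∏ i ∈ Finset.univ.erase last, f ((a i : ℝ)) :=
    Finset.prod_nonneg fun i _ => (f_pos_s17 (a i)).le
  have hq : (0 : ℝ) ≤ (31 : ℝ) ^ ((∑ i ∈ Finset.univ.erase last, (a i : ℝ)) / 3) :=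
    (Real.rpow_pos_of_pos (by norm_num) _).le
  calc ∏ i, f ((a i : ℝ))
      = (∏ i ∈ Finset.univ.erase last, f ((a i : ℝ))) * f ((a last : ℝ)) := hsplit.symm
    _ ≤ ((31 : ℝ) ^ ((∑ i ∈ Finset.univ.erase last, (a i : ℝ)) / 3)) *
        (f 1 * f 2 * (31 : ℝ) ^ ((a last : ℝ) / 3)) := by
        apply mul_le_mul (h2 ▸ h1) h3 (f_pos_s17 (a last)).le hq
    _ = f 1 * f 2 * ((31 : ℝ) ^ ((∑ i ∈ Finset.univ.erase last, (a i : ℝ)) / 3) *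
        (31 : ℝ) ^ ((a last : ℝ) / 3)) := by ring
    _ = f 1 * f 2 * (31 : ℝ) ^ ((n : ℝ) / 3) := by
        rw [← Real.rpow_add (by norm_num)]
        congr 1
        have : (∑ i ∈ Finset.univ.erase last, (a i : ℝ)) + (a last : ℝ) = (n : ℝ) := by
          rw [← hsum, ← hsumsplit]; push_cast; ring
        rw [← add_div, this]
end

section
/- In any zig-zag family as in the pipe gadget: for a pipe with n states, any two distinct zig-zags L_i and L_j (0 ≤ i < j ≤ n-1) contain a pair of crossing edges; consequently, any crossing-free graph on the pipe's points containing all frame edges contains at most one complete zig-zag. -/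
/-- The bottom points `p_t = (t, 0)` of a pipe. -/
noncomputable def pp (t : ℕ) : ℝ × ℝ := ((t : ℝ), 0)

/-- The top points `q_t = (t, 1)` of a pipe. -/
noncomputable def qq (t : ℕ) : ℝ × ℝ := ((t : ℝ), 1)

/-- The point set of a pipe of length `l`. -/
noncomputable def pipePts (l : ℕ) : Finset (ℝ × ℝ) :=
  (Finset.Icc 1 l).image pp ∪ (Finset.Icc 1 l).image qq

/-- The zig-zag `L_i` of a pipe of length `l`: for `i ≥ 1` the edges
`a_{i,t} = {p_t, q_{t+4i}}` and `b_{i,t} = {q_{t+4i}, p_{t+1}}` for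
`1 ≤ t ≤ l - 4i`; for `i = 0` the edges `a_{0,t} = {p_t, q_{t+1}}` and
`b_{0,t} = {q_t, p_t}` for `1 ≤ t ≤ l - 1`. -/
noncomputable def zigzag (l i : ℕ) : Set (Finset (ℝ × ℝ)) :=
  if i = 0 then
    {e | ∃ t, 1 ≤ t ∧ t ≤ l - 1 ∧
      (e = ({pp t, qq (t + 1)} : Finset (ℝ × ℝ)) ∨
       e = ({qq t, pp t} : Finset (ℝ × ℝ)))}
  else
    {e | ∃ t, 1 ≤ t ∧ t ≤ l - 4 * i ∧
      (e = ({pp t, qq (t + 4 * i)} : Finset (ℝ × ℝ)) ∨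
       e = ({qq (t + 4 * i), pp (t + 1)} : Finset (ℝ × ℝ)))}

/-- The horizontal frame edges of a pipe of length `l`. -/
noncomputable def frameEdges (l : ℕ) : Set (Finset (ℝ × ℝ)) :=
  {e | ∃ t, 1 ≤ t ∧ t < l ∧
    (e = ({pp t, pp (t + 1)} : Finset (ℝ × ℝ)) ∨
     e = ({qq t, qq (t + 1)} : Finset (ℝ × ℝ)))}

/-- Two edges (unordered pairs of points) cross if their relative interiors
(open segments) intersect. -/
def CrossE (e f : Finset (ℝ × ℝ)) : Prop :=
  ∃ a b c d : ℝ × ℝ, e = ({a, b} : Finset (ℝ × ℝ)) ∧ f = ({c, d} : Finset (ℝ × ℝ)) ∧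
    (openSegment ℝ a b ∩ openSegment ℝ c d).Nonempty


lemma crossE_symm {e f : Finset (ℝ × ℝ)} (h : CrossE e f) : CrossE f e := by
  obtain ⟨a, b, c, d, he, hf, x, hx1, hx2⟩ := h
  exact ⟨c, d, a, b, hf, he, x, hx2, hx1⟩

lemma pp_ne_qq (s t : ℕ) : pp s ≠ qq t := by
  simp [pp, qq, Prod.ext_iff]

lemma pp_inj {s t : ℕ} (h : pp s = pp t) : s = t := by
  have := congrArg Prod.fst h
  simp [pp] at this
  exact_mod_cast this

lemma qq_inj {s t : ℕ} (h : qq s = qq t) : s = t := by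
  have := congrArg Prod.fst h
  simp [qq] at this
  exact_mod_cast this

lemma cross_lt (n l i j : ℕ) (hl : 4 * (n - 1) < l) (hj : j < n) (hij : i < j) :
    ∃ e ∈ zigzag l i, ∃ f ∈ zigzag l j, e ≠ f ∧ CrossE e f := by
  have hjl : 4 * j + 1 ≤ l := by omega
  have hj1 : 1 ≤ j := by omega
  have hjR : (1 : ℝ) ≤ (j : ℝ) := by exact_mod_cast hj1
  by_cases hi0 : i = 0
  · -- i = 0 : use e = {pp 2, qq 3}, f = {pp 1, qq (1+4j)}
    subst hi0
    set s : ℝ := 1 / (4 * (j : ℝ) - 1) with hs_def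
    have hden : (0 : ℝ) < 4 * (j : ℝ) - 1 := by linarith
    have hs0 : 0 < s := by positivity
    have hs1 : s < 1 := by
      rw [hs_def, div_lt_one hden]; linarith
    refine ⟨{pp 2, qq 3}, ?_, {pp 1, qq (1 + 4 * j)}, ?_, ?_, ?_⟩
    · simp only [zigzag, if_pos rfl, Set.mem_setOf_eq]
      exact ⟨2, by omega, by omega, Or.inl (by norm_num)⟩
    · simp only [zigzag, if_neg (by omega : j ≠ 0), Set.mem_setOf_eq]
      exact ⟨1, le_refl 1, by omega, Or.inl rfl⟩
    · intro h
      have h2 : pp 2 ∈ ({pp 1, qq (1 + 4 * j)} : Finset (ℝ × ℝ)) := by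
        rw [← h]; simp
      rcases Finset.mem_insert.mp h2 with h3 | h3
      · have := pp_inj h3; omega
      · exact pp_ne_qq 2 (1 + 4 * j) (Finset.mem_singleton.mp h3)
    · refine ⟨pp 2, qq 3, pp 1, qq (1 + 4 * j), rfl, rfl,
        (1 - s) • pp 2 + s • qq 3, ⟨1 - s, s, by linarith, hs0, by ring, rfl⟩,
        ⟨1 - s, s, by linarith, hs0, by ring, ?_⟩⟩
      simp only [pp, qq, Prod.smul_mk, Prod.mk_add_mk, Prod.mk.injEq, smul_eq_mul]
      constructor
      · push_cast
        rw [hs_def]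
        field_simp
        ring
      · trivial
  · -- i ≥ 1 : use e = {qq (1+4i), pp 2}, f = {pp 1, qq (1+4j)}
    have hi1 : 1 ≤ i := by omega
    have hijR : (i : ℝ) + 1 ≤ (j : ℝ) := by exact_mod_cast hij
    set s : ℝ := 1 / (4 * ((j : ℝ) - (i : ℝ)) + 1) with hs_def
    have hden : (0 : ℝ) < 4 * ((j : ℝ) - (i : ℝ)) + 1 := by linarith
    have hs0 : 0 < s := by positivity
    have hs1 : s < 1 := by
      rw [hs_def, div_lt_one hden]; linarith
    refine ⟨{qq (1 + 4 * i), pp (1 + 1)}, ?_, {pp 1, qq (1 + 4 * j)}, ?_, ?_, ?_⟩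
    · simp only [zigzag, if_neg hi0, Set.mem_setOf_eq]
      exact ⟨1, le_refl 1, by omega, Or.inr rfl⟩
    · simp only [zigzag, if_neg (by omega : j ≠ 0), Set.mem_setOf_eq]
      exact ⟨1, le_refl 1, by omega, Or.inl rfl⟩
    · intro h
      have h2 : qq (1 + 4 * i) ∈ ({pp 1, qq (1 + 4 * j)} : Finset (ℝ × ℝ)) := by
        rw [← h]; simp
      rcases Finset.mem_insert.mp h2 with h3 | h3
      · exact pp_ne_qq 1 (1 + 4 * i) h3.symm
      · have := qq_inj (Finset.mem_singleton.mp h3); omega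
    · refine ⟨qq (1 + 4 * i), pp (1 + 1), pp 1, qq (1 + 4 * j), rfl, rfl,
        s • qq (1 + 4 * i) + (1 - s) • pp (1 + 1),
        ⟨s, 1 - s, hs0, by linarith, by ring, rfl⟩,
        ⟨1 - s, s, by linarith, hs0, by ring, ?_⟩⟩
      simp only [pp, qq, Prod.smul_mk, Prod.mk_add_mk, Prod.mk.injEq, smul_eq_mul]
      constructor
      · push_cast
        rw [hs_def]
        field_simp
        ring
      · ring

/-- In a pipe with `n` states and length `l > 4(n-1)`: any two distinct
zig-zags `L_i`, `L_j` contain a pair of crossing edges; consequently any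
crossing-free graph on the pipe's points containing all frame edges contains
at most one complete zig-zag. -/
theorem zigzags_cross (n l : ℕ) (hn : 1 ≤ n) (hl : 4 * (n - 1) < l) :
    (∀ i j : ℕ, i < n → j < n → i ≠ j →
      ∃ e ∈ zigzag l i, ∃ f ∈ zigzag l j, CrossE e f) ∧
    (∀ E : Set (Finset (ℝ × ℝ)),
      (∀ e ∈ E, ∃ a ∈ pipePts l, ∃ b ∈ pipePts l, a ≠ b ∧
        e = ({a, b} : Finset (ℝ × ℝ))) →
      (∀ e ∈ E, ∀ f ∈ E, e ≠ f → ¬ CrossE e f) →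
      frameEdges l ⊆ E →
      ∀ i j : ℕ, i < n → j < n → zigzag l i ⊆ E → zigzag l j ⊆ E → i = j) := by
  constructor
  · intro i j hi hj hij
    rcases Nat.lt_or_ge i j with h | h
    · obtain ⟨e, he, f, hf, _, hc⟩ := cross_lt n l i j hl hj h
      exact ⟨e, he, f, hf, hc⟩
    · have h' : j < i := by omega
      obtain ⟨e, he, f, hf, _, hc⟩ := cross_lt n l j i hl hi h'
      exact ⟨f, hf, e, he, crossE_symm hc⟩
  · intro E _ hNC _ i j hi hj hiE hjE
    by_contra hij
    rcases Nat.lt_or_ge i j with h | h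
    · obtain ⟨e, he, f, hf, hne, hc⟩ := cross_lt n l i j hl hj h
      exact hNC e (hiE he) f (hjE hf) hne hc
    · have h' : j < i := by omega
      obtain ⟨e, he, f, hf, hne, hc⟩ := cross_lt n l j i hl hi h'
      exact hNC e (hjE he) f (hiE hf) hne hc
end
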